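/- If X is a regular T1 (i.e. T3) topological space, then the Vietoris hyperspace of closed subsets of X is Hausdorff. -/

import Mathlib

open TopologicalSpace Set

/-- The Vietoris topology on the hyperspace of closed subsets, generated by the sets
`□U = {a | ↑a ⊆ U}` and `◇U = {a | (↑a ∩ U).Nonempty}` for `U` open. -/
instance vietoris (X : Type*) [TopologicalSpace X] : TopologicalSpace (Closeds X) :=
  generateFrom
    ({s | ∃ U : Set X, IsOpen U ∧ s = {a : Closeds X | (a : Set X) ⊆ U}} ∪
     {s | ∃ U : Set X, IsOpen U ∧ s = {a : Closeds X | ((a : Set X) ∩ U).Nonempty}})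

theorem closeds_t2_of_t3 {X : Type*} [TopologicalSpace X] [T1Space X] [RegularSpace X] :
    T2Space (Closeds X) := by
  constructor
  intro a b hab
  -- WLOG there is a point in a not in b (handle both directions symmetrically)
  have key : ∀ a b : Closeds X, ∀ x : X, x ∈ (a : Set X) → x ∉ (b : Set X) →
      ∃ u v : Set (Closeds X), IsOpen u ∧ IsOpen v ∧ a ∈ u ∧ b ∈ v ∧ Disjoint u v := by
    intro a b x hxa hxb
    obtain ⟨U, V, hU, hV, hxU, hbV, hUV⟩ :=
      SeparatedNhds.of_isCompact_isClosed (isCompact_singleton (x := x)) b.isClosed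
        (by simpa using hxb)
    refine ⟨{c : Closeds X | ((c : Set X) ∩ U).Nonempty}, {c : Closeds X | (c : Set X) ⊆ V},
      ?_, ?_, ⟨x, hxa, hxU (mem_singleton x)⟩, hbV, ?_⟩
    · exact isOpen_generateFrom_of_mem (Or.inr ⟨U, hU, rfl⟩)
    · exact isOpen_generateFrom_of_mem (Or.inl ⟨V, hV, rfl⟩)
    · rw [disjoint_left]
      rintro c ⟨y, hyc, hyU⟩ hcV
      exact (disjoint_left.mp hUV) hyU (hcV hyc)
  have : ¬ (a : Set X) ⊆ b ∨ ¬ (b : Set X) ⊆ a := by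
    by_contra h
    push_neg at h
    exact hab (SetLike.ext' (h.1.antisymm h.2))
  rcases this with h | h
  · obtain ⟨x, hxa, hxb⟩ := not_subset.mp h
    exact key a b x hxa hxb
  · obtain ⟨x, hxb, hxa⟩ := not_subset.mp h
    obtain ⟨u, v, hu, hv, hbu, hav, huv⟩ := key b a x hxb hxa
    exact ⟨v, u, hv, hu, hav, hbu, huv.symm⟩
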